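/- Fix 0 < v_low ≤ v̄ and an integer n ≥ 1. The supremum, over all n-level pricing mechanisms (prices 0 ≤ v₁ ≤ ⋯ ≤ vₙ ≤ v̄ with probabilities x₁,…,xₙ), of the competitive ratio over the support ambiguity set 𝓕_supp equals 𝓡ₙ = ( n·(v̄/v_low)^{1/n} − (n−1) )^{-1}. It is attained by the geometric price levels vᵢ = v_low^{(n+1−i)/n}·v̄^{(i−1)/n} for i = 1,…,n, with probabilities x₁ = (v̄/v_low)^{1/n}·𝓡ₙ and xᵢ = ((v̄/v_low)^{1/n} − 1)·𝓡ₙ for i = 2,…,n. -/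

import Mathlib

open MeasureTheory Set

noncomputable section

/-- Hindsight optimal revenue: `OPT(F) = sup_{p ∈ [0, v̄]} p · F([p, v̄])`. -/
def hindsightOpt (vbar : ℝ) (F : Measure ℝ) : ℝ :=
  ⨆ p : Icc (0 : ℝ) vbar, (p : ℝ) * (F (Icc (p : ℝ) vbar)).toReal

/-- The support ambiguity set: probability measures on `[0, v̄]` giving full mass to
`[v_low, v̄]`. -/
def Fsupp (vlow vbar : ℝ) : Set (Measure ℝ) :=
  {F | IsProbabilityMeasure F ∧ F (Icc (0 : ℝ) vbar) = 1 ∧ F (Icc vlow vbar) = 1}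

/-- Expected revenue of the `n`-level mechanism posting price `v i` with probability `x i`. -/
def mechRev (vbar : ℝ) (n : ℕ) (v x : ℕ → ℝ) (F : Measure ℝ) : ℝ :=
  ∑ i ∈ Finset.Icc 1 n, v i * x i * (F (Icc (v i) vbar)).toReal

/-- Competitive ratio of the `n`-level mechanism over the support ambiguity set. -/
def suppCR (vlow vbar : ℝ) (n : ℕ) (v x : ℕ → ℝ) : ℝ :=
  ⨅ F : ↥(Fsupp vlow vbar), mechRev vbar n v x F.1 / hindsightOpt vbar F.1

open scoped Classical

lemma toReal_prob_le_one (F : Measure ℝ) (hF : IsProbabilityMeasure F) (s : Set ℝ) :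
    (F s).toReal ≤ 1 := by
  simpa using ENNReal.toReal_mono (by norm_num) (prob_le_one (μ := F) (s := s))

lemma toReal_prob_nonneg (F : Measure ℝ) (s : Set ℝ) : 0 ≤ (F s).toReal :=
  ENNReal.toReal_nonneg

lemma dirac_Icc_toReal (p q vbar : ℝ) :
    ((Measure.dirac p) (Icc q vbar)).toReal = if q ≤ p ∧ p ≤ vbar then 1 else 0 := by
  rw [Measure.dirac_apply' _ measurableSet_Icc]
  by_cases h : q ≤ p ∧ p ≤ vbar
  · rw [indicator_of_mem (mem_Icc.mpr h)]; simp [h]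
  · rw [indicator_of_notMem (fun hc => h (mem_Icc.mp hc))]; simp [h]

lemma dirac_mem_Fsupp {vlow vbar p : ℝ} (h0 : 0 ≤ vlow) (hl : vlow ≤ p) (hb : p ≤ vbar) :
    Measure.dirac p ∈ Fsupp vlow vbar := by
  refine ⟨by infer_instance, ?_, ?_⟩
  · rw [Measure.dirac_apply' _ measurableSet_Icc,
      indicator_of_mem (mem_Icc.mpr ⟨le_trans h0 hl, hb⟩)]; rfl
  · rw [Measure.dirac_apply' _ measurableSet_Icc,
      indicator_of_mem (mem_Icc.mpr ⟨hl, hb⟩)]; rfl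

lemma Fsupp_prob {vlow vbar : ℝ} {F : Measure ℝ} (hF : F ∈ Fsupp vlow vbar) :
    IsProbabilityMeasure F := hF.1

lemma Fsupp_full {vlow vbar : ℝ} {F : Measure ℝ} (hF : F ∈ Fsupp vlow vbar) {a : ℝ}
    (ha : a ≤ vlow) : (F (Icc a vbar)).toReal = 1 := by
  have h1 : F (Icc a vbar) = 1 := by
    have := hF.1
    refine le_antisymm prob_le_one ?_
    rw [← hF.2.2]
    exact measure_mono (Icc_subset_Icc_left ha)
  rw [h1]; rfl

lemma optBddAbove {vbar : ℝ} (hb : 0 ≤ vbar) (F : Measure ℝ) (hF : IsProbabilityMeasure F) :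
    BddAbove (range fun p : Icc (0:ℝ) vbar => (p : ℝ) * (F (Icc (p : ℝ) vbar)).toReal) := by
  refine ⟨vbar, ?_⟩
  rintro y ⟨p, rfl⟩
  calc (p : ℝ) * (F (Icc (p : ℝ) vbar)).toReal
      ≤ (p : ℝ) * 1 := mul_le_mul_of_nonneg_left (toReal_prob_le_one F hF _) p.2.1
    _ ≤ vbar := by rw [mul_one]; exact p.2.2

lemma le_opt {vbar : ℝ} (F : Measure ℝ) (hF : IsProbabilityMeasure F) {p : ℝ}
    (h0 : 0 ≤ p) (hb : p ≤ vbar) :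
    p * (F (Icc p vbar)).toReal ≤ hindsightOpt vbar F :=
  le_ciSup (optBddAbove (le_trans h0 hb) F hF) (⟨p, h0, hb⟩ : Icc (0:ℝ) vbar)

lemma opt_le {vbar : ℝ} (hb : 0 ≤ vbar) (F : Measure ℝ) {c : ℝ}
    (h : ∀ p : ℝ, 0 ≤ p → p ≤ vbar → p * (F (Icc p vbar)).toReal ≤ c) :
    hindsightOpt vbar F ≤ c := by
  haveI : Nonempty ↥(Icc (0:ℝ) vbar) := (Set.nonempty_Icc.mpr hb).to_subtype
  exact ciSup_le fun p => h p p.2.1 p.2.2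

lemma opt_dirac {vbar p : ℝ} (h0 : 0 ≤ p) (hb : p ≤ vbar) :
    hindsightOpt vbar (Measure.dirac p) = p := by
  refine le_antisymm (opt_le (le_trans h0 hb) _ fun q hq0 hqb => ?_) ?_
  · rw [dirac_Icc_toReal]
    by_cases h : q ≤ p ∧ p ≤ vbar
    · simpa [h] using h.1
    · simp [h, h0]
  · have := le_opt (Measure.dirac p) (by infer_instance) h0 hb
    rwa [dirac_Icc_toReal, if_pos ⟨le_refl p, hb⟩, mul_one] at this

lemma opt_pos {vlow vbar : ℝ} (hlow : 0 < vlow) (hbar : vlow ≤ vbar) {F : Measure ℝ}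
    (hF : F ∈ Fsupp vlow vbar) : 0 < hindsightOpt vbar F := by
  have h := le_opt F hF.1 hlow.le hbar
  rw [Fsupp_full hF le_rfl, mul_one] at h
  exact lt_of_lt_of_le hlow h

lemma mechRev_nonneg {vbar : ℝ} {n : ℕ} {v x : ℕ → ℝ}
    (hv : ∀ i ∈ Finset.Icc 1 n, 0 ≤ v i) (hx : ∀ i ∈ Finset.Icc 1 n, 0 ≤ x i)
    (F : Measure ℝ) : 0 ≤ mechRev vbar n v x F :=
  Finset.sum_nonneg fun i hi =>
    mul_nonneg (mul_nonneg (hv i hi) (hx i hi)) ENNReal.toReal_nonneg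

lemma ratioBddBelow (vlow vbar : ℝ) (hlow : 0 < vlow) (hbar : vlow ≤ vbar) (n : ℕ)
    (v x : ℕ → ℝ) (hv : ∀ i ∈ Finset.Icc 1 n, 0 ≤ v i)
    (hx : ∀ i ∈ Finset.Icc 1 n, 0 ≤ x i) :
    BddBelow (range fun F : ↥(Fsupp vlow vbar) =>
      mechRev vbar n v x F.1 / hindsightOpt vbar F.1) := by
  refine ⟨0, ?_⟩
  rintro y ⟨F, rfl⟩
  exact div_nonneg (mechRev_nonneg hv hx F.1) (opt_pos hlow hbar F.2).le

lemma mono_of_step {v : ℕ → ℝ} {n : ℕ} (h : ∀ i, 1 ≤ i → i < n → v i ≤ v (i + 1)) :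
    ∀ i j, 1 ≤ i → i ≤ j → j ≤ n → v i ≤ v j := by
  intro i j h1 hij hjn
  induction j with
  | zero => omega
  | succ k ih =>
    rcases Nat.eq_or_lt_of_le hij with rfl | hlt
    · exact le_refl _
    · exact le_trans (ih (by omega) (by omega)) (h k (by omega) (by omega))


lemma telescope_prod {w : ℕ → ℝ} {n : ℕ} (hw : ∀ i, 1 ≤ i → i ≤ n + 1 → w i ≠ 0) :
    ∀ k, 1 ≤ k → k ≤ n → ∏ j ∈ Finset.Icc 1 k, (w (j + 1) / w j) = w (k + 1) / w 1 := by
  intro k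
  induction k with
  | zero => omega
  | succ m ih =>
    intro _ hkn
    rcases Nat.eq_zero_or_pos m with rfl | hm
    · simp
    · rw [Finset.prod_Icc_succ_top (by omega), ih (by omega) (by omega)]
      have h1 : w (m + 1) ≠ 0 := hw _ (by omega) (by omega)
      have h2 : w 1 ≠ 0 := hw _ (by omega) (by omega)
      field_simp

lemma chain (vlow vbar : ℝ) (hlow : 0 < vlow) (hbar : vlow ≤ vbar) (n : ℕ) (hn : 1 ≤ n)
    (w x : ℕ → ℝ) (hw1 : w 1 = vlow)
    (hwmono : ∀ i j, 1 ≤ i → i ≤ j → j ≤ n + 1 → w i ≤ w j)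
    (hwlow : ∀ i, 1 ≤ i → i ≤ n + 1 → vlow ≤ w i)
    (hwtop : w (n + 1) = vbar)
    (hx : ∀ i ∈ Finset.Icc 1 n, 0 ≤ x i) (hxsum : ∑ i ∈ Finset.Icc 1 n, x i = 1)
    (c : ℝ) (hc : 0 < c)
    (hkey : ∀ p, vlow ≤ p → p ≤ vbar →
      c * p ≤ ∑ i ∈ Finset.Icc 1 n, (if w i ≤ p then w i * x i else 0)) :
    c * ((n : ℝ) * (vbar / vlow) ^ ((1 : ℝ) / n) - ((n : ℝ) - 1)) ≤ 1 := by
  have hwpos : ∀ i, 1 ≤ i → i ≤ n + 1 → 0 < w i := fun i h1 h2 =>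
    lt_of_lt_of_le hlow (hwlow i h1 h2)
  have hwbar : ∀ i, 1 ≤ i → i ≤ n + 1 → w i ≤ vbar := fun i h1 h2 =>
    hwtop ▸ hwmono i (n + 1) h1 (by omega) (by omega)
  set S : ℕ → ℝ := fun k => ∑ i ∈ Finset.Icc 1 k, w i * x i with hS
  -- Fact (i): strict-jump inequality
  have fact1 : ∀ k, 1 ≤ k → k ≤ n → w k < w (k + 1) → c * w (k + 1) ≤ S k := by
    intro k hk1 hkn hlt
    by_contra hcon
    push_neg at hcon
    have hdiv : S k / c < w (k + 1) := (div_lt_iff₀ hc).mpr (by nlinarith)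
    set p : ℝ := max vlow ((S k / c + w (k + 1)) / 2) with hp
    have hwk1b : w (k + 1) ≤ vbar := hwbar _ (by omega) (by omega)
    have hpv : p < w (k + 1) := by
      apply max_lt
      · exact lt_of_le_of_lt (hwlow k (by omega) (by omega)) hlt
      · linarith
    have hpl : vlow ≤ p := le_max_left _ _
    have hpb : p ≤ vbar := le_trans hpv.le hwk1b
    have hkey' := hkey p hpl hpb
    have hsum_le : ∑ i ∈ Finset.Icc 1 n, (if w i ≤ p then w i * x i else 0) ≤ S k := by
      have hsplit : ∑ i ∈ Finset.Ioc 0 k, (if w i ≤ p then w i * x i else 0)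
          + ∑ i ∈ Finset.Ioc k n, (if w i ≤ p then w i * x i else 0)
          = ∑ i ∈ Finset.Ioc 0 n, (if w i ≤ p then w i * x i else 0) :=
        Finset.sum_Ioc_consecutive _ (by omega) hkn
      have e1 : Finset.Icc 1 n = Finset.Ioc 0 n := by exact Finset.Icc_add_one_left_eq_Ioc 0 _
      have e2 : Finset.Icc 1 k = Finset.Ioc 0 k := by exact Finset.Icc_add_one_left_eq_Ioc 0 _
      have hSk : S k = ∑ i ∈ Finset.Ioc 0 k, w i * x i := by
        simp only [hS]; rw [e2]
      rw [e1, ← hsplit, hSk]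
      have htail : ∑ i ∈ Finset.Ioc k n, (if w i ≤ p then w i * x i else 0) = 0 := by
        apply Finset.sum_eq_zero
        intro i hi
        rw [Finset.mem_Ioc] at hi
        have : w (k + 1) ≤ w i := hwmono (k + 1) i (by omega) (by omega) (by omega)
        rw [if_neg (by linarith)]
      rw [htail, add_zero]
      apply Finset.sum_le_sum
      intro i hi
      rw [Finset.mem_Ioc] at hi
      split
      · exact le_refl _
      · exact mul_nonneg (hwpos i (by omega) (by omega)).le
          (hx i (Finset.mem_Icc.mpr ⟨by omega, by omega⟩))
    have hmid : S k / c < p := lt_of_lt_of_le (by linarith) (le_max_right _ _)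
    have : S k < c * p := by
      have := mul_lt_mul_of_pos_left hmid hc
      rwa [mul_div_cancel₀ _ hc.ne'] at this
    linarith
  -- Fact (ii): unconditional top inequality
  have fact2 : c * vbar ≤ S n := by
    have h := hkey vbar hbar (le_refl _)
    have heq : ∑ i ∈ Finset.Icc 1 n, (if w i ≤ vbar then w i * x i else 0)
        = ∑ i ∈ Finset.Icc 1 n, w i * x i := by
      apply Finset.sum_congr rfl
      intro i hi
      rw [Finset.mem_Icc] at hi
      exact if_pos (hwbar i hi.1 (by omega))
    rw [heq] at h
    exact h
  -- invariant
  set D : ℕ → ℝ := fun k => ∑ j ∈ Finset.Icc 1 (k - 1), (w (j + 1) / w j - 1) with hD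
  have invar : ∀ k, 1 ≤ k → k ≤ n →
      S k / w k + c * D k ≤ ∑ i ∈ Finset.Icc 1 k, x i := by
    intro k
    induction k with
    | zero => omega
    | succ m ih =>
      intro _ hkn
      rcases Nat.eq_zero_or_pos m with rfl | hm
      · have hne : w 1 ≠ 0 := (hwpos 1 le_rfl (by omega)).ne'
        have hD1 : D 1 = 0 := by
          simp only [hD]
          rw [show (1:ℕ) - 1 = 0 from rfl, Finset.Icc_eq_empty (by omega), Finset.sum_empty]
        have hS1 : S 1 = w 1 * x 1 := by
          simp only [hS]
          rw [Finset.Icc_self, Finset.sum_singleton]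
        rw [hD1, hS1, Finset.Icc_self, Finset.sum_singleton, mul_zero, add_zero,
          mul_comm, mul_div_assoc, div_self hne, mul_one]
      · have IH := ih (by omega) (by omega)
        have hTstep : ∑ i ∈ Finset.Icc 1 (m + 1), x i
            = (∑ i ∈ Finset.Icc 1 m, x i) + x (m + 1) :=
          Finset.sum_Icc_succ_top (by omega) _
        have hSstep : S (m + 1) = S m + w (m + 1) * x (m + 1) :=
          Finset.sum_Icc_succ_top (by omega) _
        have hDstep : D (m + 1) = D m + (w (m + 1) / w m - 1) := by
          simp only [hD, Nat.add_sub_cancel]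
          rcases Nat.exists_eq_add_of_le hm with ⟨t, rfl⟩
          rw [Nat.add_comm 1 t, Nat.add_sub_cancel]
          exact Finset.sum_Icc_succ_top (by omega) _
        have hwm : 0 < w m := hwpos m (by omega) (by omega)
        have hwm1 : 0 < w (m + 1) := hwpos (m + 1) (by omega) (by omega)
        have hmono1 : w m ≤ w (m + 1) := hwmono m (m + 1) (by omega) (by omega) (by omega)
        have hstep : S m / w (m + 1) + c * (w (m + 1) / w m - 1) ≤ S m / w m := by
          rcases eq_or_lt_of_le hmono1 with heq | hlt
          · rw [← heq, div_self hwm.ne']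
            simp
          · have hkeyS := fact1 m (by omega) (by omega) hlt
            have h3 : (0:ℝ) ≤ 1 / w m - 1 / w (m + 1) := by
              have := one_div_le_one_div_of_le hwm hmono1
              linarith
            have h4 := mul_le_mul_of_nonneg_right hkeyS h3
            have e1 : c * (w (m + 1) / w m - 1)
                = (c * w (m + 1)) * (1 / w m - 1 / w (m + 1)) := by
              field_simp
            have e2 : S m * (1 / w m - 1 / w (m + 1)) = S m / w m - S m / w (m + 1) := by
              field_simp
            rw [e1]
            linarith [h4, e2]
        have hSm1 : S (m + 1) / w (m + 1) = S m / w (m + 1) + x (m + 1) := by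
          rw [hSstep, add_div, mul_div_cancel_left₀ _ hwm1.ne']
        rw [hTstep, hSm1, hDstep]
        linarith [hstep, IH]
  -- conclude
  obtain ⟨m, rfl⟩ : ∃ m, n = m + 1 := ⟨n - 1, by omega⟩
  have hfin := invar (m + 1) (by omega) le_rfl
  rw [hxsum] at hfin
  have hwn : 0 < w (m + 1) := hwpos _ (by omega) (by omega)
  have h1 : c * (w (m + 2) / w (m + 1)) ≤ S (m + 1) / w (m + 1) := by
    have hcb : c * w (m + 2) ≤ S (m + 1) := by rw [hwtop]; exact fact2
    rw [← mul_div_assoc]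
    gcongr
  have hDn : D (m + 1) = (∑ j ∈ Finset.Icc 1 m, w (j + 1) / w j) - m := by
    simp only [hD, Nat.add_sub_cancel, Finset.sum_sub_distrib, Finset.sum_const,
      Nat.card_Icc, Nat.add_sub_cancel, nsmul_eq_mul, mul_one]
  -- AM-GM
  have hz : ∀ j ∈ Finset.Icc 1 (m + 1), (0:ℝ) ≤ w (j + 1) / w j := by
    intro j hj
    rw [Finset.mem_Icc] at hj
    exact div_nonneg (hwpos (j + 1) (by omega) (by omega)).le (hwpos j (by omega) (by omega)).le
  have hprod : ∏ j ∈ Finset.Icc 1 (m + 1), (w (j + 1) / w j) = vbar / vlow := by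
    rw [telescope_prod (fun i hi1 hi2 => (hwpos i hi1 hi2).ne') (m + 1) (by omega) le_rfl,
      hwtop, hw1]
  have hwsum : ∑ _j ∈ Finset.Icc 1 (m + 1), (1:ℝ) / ((m:ℝ) + 1) = 1 := by
    rw [Finset.sum_const, Nat.card_Icc, Nat.add_sub_cancel, nsmul_eq_mul]
    have : ((m:ℝ) + 1) ≠ 0 := by positivity
    push_cast
    field_simp
  have amgm : (vbar / vlow) ^ ((1:ℝ) / ((m:ℝ) + 1))
      ≤ ∑ j ∈ Finset.Icc 1 (m + 1), (1 / ((m:ℝ) + 1)) * (w (j + 1) / w j) := by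
    have h := Real.geom_mean_le_arith_mean_weighted (Finset.Icc 1 (m + 1))
      (fun _ => (1:ℝ) / ((m:ℝ) + 1)) (fun j => w (j + 1) / w j)
      (fun j _ => by positivity) hwsum hz
    rwa [Real.finset_prod_rpow _ _ hz, hprod] at h
  have hQ : ((m:ℝ) + 1) * (vbar / vlow) ^ ((1:ℝ) / ((m:ℝ) + 1))
      ≤ ∑ j ∈ Finset.Icc 1 (m + 1), w (j + 1) / w j := by
    have hm1 : (0:ℝ) < (m:ℝ) + 1 := by positivity
    have h2 := mul_le_mul_of_nonneg_left amgm hm1.le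
    rw [Finset.mul_sum] at h2
    calc ((m:ℝ) + 1) * (vbar / vlow) ^ ((1:ℝ) / ((m:ℝ) + 1))
        ≤ ∑ j ∈ Finset.Icc 1 (m + 1), ((m:ℝ) + 1) * ((1 / ((m:ℝ) + 1)) * (w (j + 1) / w j)) := h2
      _ = ∑ j ∈ Finset.Icc 1 (m + 1), w (j + 1) / w j := by
          apply Finset.sum_congr rfl
          intro j _
          have hne : ((m:ℝ) + 1) ≠ 0 := by positivity
          rw [← mul_assoc, mul_one_div, div_self hne, one_mul]
  have hQsplit : ∑ j ∈ Finset.Icc 1 (m + 1), w (j + 1) / w j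
      = (∑ j ∈ Finset.Icc 1 m, w (j + 1) / w j) + w (m + 2) / w (m + 1) :=
    Finset.sum_Icc_succ_top (by omega) _
  -- assemble
  push_cast
  have hA : c * (((m:ℝ) + 1) * (vbar / vlow) ^ ((1:ℝ) / ((m:ℝ) + 1)) - ((m:ℝ) + 1 - 1))
      ≤ c * ((∑ j ∈ Finset.Icc 1 (m + 1), w (j + 1) / w j) - ((m:ℝ) + 1 - 1)) := by
    apply mul_le_mul_of_nonneg_left _ hc.le
    linarith [hQ]
  have hB : c * ((∑ j ∈ Finset.Icc 1 (m + 1), w (j + 1) / w j) - ((m:ℝ) + 1 - 1))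
      = c * (w (m + 2) / w (m + 1)) + c * D (m + 1) := by
    rw [hDn, hQsplit]; ring
  linarith [hA, hB, h1, hfin]


lemma sum_head_le {f : ℕ → ℝ} {k n : ℕ} (hkn : k ≤ n)
    (h0 : ∀ i, k < i → i ≤ n → 0 ≤ f i) :
    ∑ i ∈ Finset.Icc 1 k, f i ≤ ∑ i ∈ Finset.Icc 1 n, f i := by
  have e1 : Finset.Icc 1 n = Finset.Ioc 0 n := by exact Finset.Icc_add_one_left_eq_Ioc 0 _
  have e2 : Finset.Icc 1 k = Finset.Ioc 0 k := by exact Finset.Icc_add_one_left_eq_Ioc 0 _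
  rw [e1, e2, ← Finset.sum_Ioc_consecutive _ (Nat.zero_le k) hkn]
  have h : 0 ≤ ∑ i ∈ Finset.Ioc k n, f i :=
    Finset.sum_nonneg fun i hi => by
      rw [Finset.mem_Ioc] at hi; exact h0 i hi.1 hi.2
  linarith

/-- The optimal `n`-level competitive ratio over the support ambiguity set is
`𝓡ₙ = (n(v̄/v_low)^{1/n} - (n-1))⁻¹`, attained by geometric prices
`vᵢ = v_low^{(n+1-i)/n} v̄^{(i-1)/n}` with probabilities `x₁ = (v̄/v_low)^{1/n}𝓡ₙ`,
`xᵢ = ((v̄/v_low)^{1/n} - 1)𝓡ₙ` for `i ≥ 2`. -/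
theorem stmt1 (vlow vbar : ℝ) (hlow : 0 < vlow) (hbar : vlow ≤ vbar)
    (n : ℕ) (hn : 1 ≤ n)
    (Rn : ℝ) (hRn : Rn = ((n : ℝ) * (vbar / vlow) ^ ((1 : ℝ) / n) - ((n : ℝ) - 1))⁻¹)
    (vG xG : ℕ → ℝ)
    (hvG : ∀ i, vG i = vlow ^ (((n : ℝ) + 1 - (i : ℝ)) / n) * vbar ^ (((i : ℝ) - 1) / n))
    (hxG : ∀ i, xG i = if i = 1 then (vbar / vlow) ^ ((1 : ℝ) / n) * Rn
        else ((vbar / vlow) ^ ((1 : ℝ) / n) - 1) * Rn) :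
    (∀ v x : ℕ → ℝ, 0 ≤ v 1 → (∀ i, 1 ≤ i → i < n → v i ≤ v (i + 1)) → v n ≤ vbar →
        (∀ i ∈ Finset.Icc 1 n, 0 ≤ x i) → ∑ i ∈ Finset.Icc 1 n, x i = 1 →
        suppCR vlow vbar n v x ≤ Rn) ∧
    (∀ i ∈ Finset.Icc 1 n, 0 ≤ xG i) ∧
    (∑ i ∈ Finset.Icc 1 n, xG i = 1) ∧
    suppCR vlow vbar n vG xG = Rn := by
  classical
  have hbar0 : 0 < vbar := lt_of_lt_of_le hlow hbar
  have hnR : ((n : ℝ)) ≠ 0 := by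
    have : (0:ℝ) < (n:ℝ) := by exact_mod_cast hn
    exact this.ne'
  set r : ℝ := (vbar / vlow) ^ ((1 : ℝ) / n) with hr
  set d : ℝ := (n : ℝ) * r - ((n : ℝ) - 1) with hd
  have hr1 : 1 ≤ r := Real.one_le_rpow ((one_le_div hlow).mpr hbar) (by positivity)
  have hr0 : 0 < r := lt_of_lt_of_le one_pos hr1
  have hn1 : (1 : ℝ) ≤ (n : ℝ) := by exact_mod_cast hn
  have hd1 : (1 : ℝ) ≤ d := by rw [hd]; nlinarith [hr1, hn1]
  have hd0 : 0 < d := lt_of_lt_of_le one_pos hd1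
  have hRnpos : 0 < Rn := by rw [hRn]; exact inv_pos.mpr hd0
  have hRd : Rn * d = 1 := by rw [hRn]; exact inv_mul_cancel₀ hd0.ne'
  -- geometric price formula
  have hvbar_pow : ∀ k : ℕ, r ^ k = (vbar / vlow) ^ ((k : ℝ) / n) := by
    intro k
    rw [hr, ← Real.rpow_natCast ((vbar / vlow) ^ ((1 : ℝ) / (n : ℝ))) k,
      ← Real.rpow_mul (by positivity), div_mul_eq_mul_div, one_mul]
  have hvG' : ∀ k : ℕ, vG (k + 1) = vlow * r ^ k := by
    intro k
    rw [hvG (k + 1)]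
    push_cast
    have e1 : ((n : ℝ) + 1 - ((k : ℝ) + 1)) / n = 1 - (k : ℝ) / n := by
      field_simp
      ring
    have e2 : ((k : ℝ) + 1 - 1) / n = (k : ℝ) / n := by ring_nf
    rw [e1, e2, Real.rpow_sub hlow, Real.rpow_one, hvbar_pow k,
      Real.div_rpow hbar0.le hlow.le]
    have hne : vlow ^ ((k : ℝ) / (n : ℝ)) ≠ 0 := by positivity
    field_simp
  have hvG1 : vG 1 = vlow := by
    have := hvG' 0
    simpa using this
  have hvG'' : ∀ i : ℕ, 1 ≤ i → vG i = vlow * r ^ (i - 1) := by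
    intro i h1
    obtain ⟨j, rfl⟩ : ∃ j, i = j + 1 := ⟨i - 1, by omega⟩
    rw [hvG' j, Nat.add_sub_cancel]
  have hrtop : vlow * r ^ n = vbar := by
    rw [hvbar_pow n, div_self hnR, Real.rpow_one]
    field_simp
  have hvGle : ∀ i, 1 ≤ i → i ≤ n → vG i ≤ vbar := by
    intro i h1 h2
    rw [hvG'' i h1, ← hrtop]
    exact mul_le_mul_of_nonneg_left (pow_le_pow_right₀ hr1 (by omega)) hlow.le
  have hvGmono : ∀ i j, 1 ≤ i → i ≤ j → vG i ≤ vG j := by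
    intro i j h1 hij
    rw [hvG'' i h1, hvG'' j (by omega)]
    exact mul_le_mul_of_nonneg_left (pow_le_pow_right₀ hr1 (by omega)) hlow.le
  have hvGpos : ∀ i, 1 ≤ i → 0 < vG i := by
    intro i h1
    rw [hvG'' i h1]
    positivity
  have hvGnonneg : ∀ i ∈ Finset.Icc 1 n, 0 ≤ vG i := fun i hi =>
    (hvGpos i (Finset.mem_Icc.mp hi).1).le
  -- probabilities
  have hxG0 : ∀ i ∈ Finset.Icc 1 n, 0 ≤ xG i := by
    intro i _
    rw [hxG i]
    split
    · exact mul_nonneg (by linarith) hRnpos.le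
    · exact mul_nonneg (by linarith) hRnpos.le
  have hxGsum : ∑ i ∈ Finset.Icc 1 n, xG i = 1 := by
    have hins : Finset.Icc 1 n = insert 1 (Finset.Icc 2 n) := by
      ext j; simp only [Finset.mem_Icc, Finset.mem_insert]; omega
    rw [hins, Finset.sum_insert (by simp [Finset.mem_Icc]), hxG 1, if_pos rfl]
    have hconst : ∑ i ∈ Finset.Icc 2 n, xG i = ((n : ℝ) - 1) * ((r - 1) * Rn) := by
      rw [Finset.sum_congr rfl (fun i hi => by
        rw [hxG i, if_neg (by rw [Finset.mem_Icc] at hi; omega)]),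
        Finset.sum_const, Nat.card_Icc, nsmul_eq_mul]
      congr 1
      rw [show (n + 1 - 2 : ℕ) = n - 1 from by omega, Nat.cast_sub hn]
      norm_num
    rw [hconst]
    calc r * Rn + ((n : ℝ) - 1) * ((r - 1) * Rn) = Rn * d := by rw [hd]; ring
      _ = 1 := hRd
  -- geometric partial sums
  have hgsum : ∀ k, 1 ≤ k → k ≤ n → ∑ i ∈ Finset.Icc 1 k, vG i * xG i = Rn * vlow * r ^ k := by
    intro k
    induction k with
    | zero => omega
    | succ m ih =>
      intro _ hkn
      rcases Nat.eq_zero_or_pos m with rfl | hm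
      · simp only [zero_add, Finset.Icc_self, Finset.sum_singleton]
        rw [hvG1, hxG 1, if_pos rfl, pow_one]
        ring
      · rw [Finset.sum_Icc_succ_top (by omega), ih (by omega) (by omega),
          hvG' m, hxG (m + 1), if_neg (by omega)]
        ring
  -- common setup
  have hmemvbar : Measure.dirac vbar ∈ Fsupp vlow vbar := dirac_mem_Fsupp hlow.le hbar le_rfl
  haveI : Nonempty ↥(Fsupp vlow vbar) := ⟨⟨_, hmemvbar⟩⟩
  have hbddG := ratioBddBelow vlow vbar hlow hbar n vG xG hvGnonneg hxG0
  refine ⟨?_, hxG0, hxGsum, ?_⟩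
  · -- PART 1: upper bound for all mechanisms
    intro v x hv1 hvstep hvn hx hxs
    have hvmono := mono_of_step hvstep
    have hv0 : ∀ i ∈ Finset.Icc 1 n, 0 ≤ v i := fun i hi => by
      rw [Finset.mem_Icc] at hi; exact le_trans hv1 (hvmono 1 i le_rfl hi.1 hi.2)
    have hbddv := ratioBddBelow vlow vbar hlow hbar n v x hv0 hx
    by_cases hc0 : suppCR vlow vbar n v x ≤ 0
    · linarith [hRnpos]
    push_neg at hc0
    by_cases hcase : vlow < v 1
    · -- a point mass just below all prices earns zero
      exfalso
      have hmem : Measure.dirac vlow ∈ Fsupp vlow vbar := dirac_mem_Fsupp hlow.le le_rfl hbar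
      have h := ciInf_le hbddv (⟨Measure.dirac vlow, hmem⟩ : ↥(Fsupp vlow vbar))
      have hzero : mechRev vbar n v x (Measure.dirac vlow) = 0 := by
        apply Finset.sum_eq_zero
        intro i hi
        rw [Finset.mem_Icc] at hi
        rw [dirac_Icc_toReal, if_neg, mul_zero]
        rintro ⟨h1, -⟩
        have h2 : vlow < v i := lt_of_lt_of_le hcase (hvmono 1 i le_rfl hi.1 hi.2)
        linarith
      rw [hzero] at h
      simp only [Measure.dirac_apply] at h
      rw [zero_div] at h
      exact absurd h (not_le.mpr hc0)
    push_neg at hcase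
    -- clip prices from below at vlow
    set w : ℕ → ℝ := fun i => if n < i then vbar else max (v i) vlow with hw
    have hwnonneg : ∀ i ∈ Finset.Icc 1 n, 0 ≤ w i := by
      intro i hi
      rw [Finset.mem_Icc] at hi
      simp only [hw]; rw [if_neg (by omega)]
      exact le_trans hlow.le (le_max_right _ _)
    have hbddw := ratioBddBelow vlow vbar hlow hbar n w x hwnonneg hx
    have hcc : suppCR vlow vbar n v x ≤ suppCR vlow vbar n w x := by
      apply ciInf_mono hbddv
      rintro ⟨F, hF⟩
      have hopt := opt_pos hlow hbar hF
      apply div_le_div_of_nonneg_right ?_ hopt.le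
      apply Finset.sum_le_sum
      intro i hi
      rw [Finset.mem_Icc] at hi
      simp only [hw]; rw [if_neg (by omega)]
      by_cases hvi : vlow ≤ v i
      · rw [max_eq_left hvi]
      · push_neg at hvi
        rw [max_eq_right hvi.le, Fsupp_full hF hvi.le, Fsupp_full hF le_rfl, mul_one, mul_one]
        exact mul_le_mul_of_nonneg_right hvi.le
          (hx i (Finset.mem_Icc.mpr ⟨hi.1, hi.2⟩))
    rcases le_or_gt (suppCR vlow vbar n w x) 0 with hc'0 | hc'pos
    · linarith
    have key := chain vlow vbar hlow hbar n hn w x ?_ ?_ ?_ ?_ hx hxs _ hc'pos ?_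
    · have key' : suppCR vlow vbar n w x * d ≤ 1 := by rw [hd, hr]; exact key
      have : suppCR vlow vbar n w x ≤ Rn := by
        rw [hRn, ← one_div]
        exact (le_div_iff₀ hd0).mpr key'
      linarith
    · -- w 1 = vlow
      simp only [hw]; rw [if_neg (by omega), max_eq_right hcase]
    · -- monotone
      intro i j hi1 hij hj
      by_cases hjn : n < j
      · simp only [hw]; rw [if_pos hjn]
        by_cases hin : n < i
        · rw [if_pos hin]
        · rw [if_neg hin]
          exact max_le (le_trans (hvmono i n hi1 (by omega) le_rfl) hvn) hbar
      · have hin : ¬ n < i := by omega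
        simp only [hw]; rw [if_neg hjn, if_neg hin]
        exact max_le_max (hvmono i j hi1 hij (by omega)) le_rfl
    · -- lower bound
      intro i hi1 hi2
      simp only [hw]
      split
      · exact hbar
      · exact le_max_right _ _
    · -- top
      simp only [hw]; rw [if_pos (by omega)]
    · -- hkey for chain
      intro p hpl hpb
      have hp0 : 0 < p := lt_of_lt_of_le hlow hpl
      have hmem : Measure.dirac p ∈ Fsupp vlow vbar := dirac_mem_Fsupp hlow.le hpl hpb
      have h := ciInf_le hbddw (⟨Measure.dirac p, hmem⟩ : ↥(Fsupp vlow vbar))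
      have hrev : mechRev vbar n w x (Measure.dirac p)
          = ∑ i ∈ Finset.Icc 1 n, (if w i ≤ p then w i * x i else 0) := by
        apply Finset.sum_congr rfl
        intro i hi
        rw [dirac_Icc_toReal]
        by_cases hwi : w i ≤ p
        · rw [if_pos ⟨hwi, hpb⟩, if_pos hwi, mul_one]
        · rw [if_neg (fun hc => hwi hc.1), if_neg hwi, mul_zero]
      rw [hrev, opt_dirac hp0.le hpb] at h
      exact (le_div_iff₀ hp0).mp h
  · -- PART 4: the geometric mechanism attains Rn
    apply le_antisymm
    · -- ≤ : point mass at vbar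
      have h := ciInf_le hbddG (⟨Measure.dirac vbar, hmemvbar⟩ : ↥(Fsupp vlow vbar))
      refine le_trans h (le_of_eq ?_)
      have hrev : mechRev vbar n vG xG (Measure.dirac vbar) = Rn * vbar := by
        have : mechRev vbar n vG xG (Measure.dirac vbar)
            = ∑ i ∈ Finset.Icc 1 n, vG i * xG i := by
          apply Finset.sum_congr rfl
          intro i hi
          rw [Finset.mem_Icc] at hi
          rw [dirac_Icc_toReal, if_pos ⟨hvGle i hi.1 hi.2, le_rfl⟩, mul_one]
        rw [this, hgsum n hn le_rfl, mul_assoc, hrtop]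
      rw [hrev, opt_dirac hbar0.le le_rfl, mul_div_assoc, div_self hbar0.ne', mul_one]
    · -- ≥ : revenue dominates Rn · OPT on all of Fsupp
      apply le_ciInf
      rintro ⟨F, hF⟩
      haveI : IsProbabilityMeasure F := hF.1
      have hopt := opt_pos hlow hbar hF
      rw [le_div_iff₀ hopt]
      have hkey : ∀ p : ℝ, 0 ≤ p → p ≤ vbar →
          p * (F (Icc p vbar)).toReal ≤ mechRev vbar n vG xG F / Rn := by
        intro p hq0 hqb
        rw [le_div_iff₀ hRnpos]
        have ht0 : 0 ≤ (F (Icc p vbar)).toReal := ENNReal.toReal_nonneg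
        have ht1 : (F (Icc p vbar)).toReal ≤ 1 := toReal_prob_le_one F hF.1 _
        by_cases hpl : p ≤ vlow
        · have htv : (F (Icc vlow vbar)).toReal = 1 := Fsupp_full hF le_rfl
          have hterm : vlow * (r * Rn) ≤ mechRev vbar n vG xG F := by
            have hsingle := Finset.single_le_sum
              (f := fun i => vG i * xG i * (F (Icc (vG i) vbar)).toReal)
              (fun i hi => mul_nonneg (mul_nonneg (hvGnonneg i hi) (hxG0 i hi))
                ENNReal.toReal_nonneg)
              (Finset.mem_Icc.mpr ⟨le_rfl, hn⟩)
            rw [hvG1, hxG 1, if_pos rfl, htv, mul_one] at hsingle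
            exact hsingle
          calc p * (F (Icc p vbar)).toReal * Rn
              ≤ vlow * Rn := by
                have hpt : p * (F (Icc p vbar)).toReal ≤ vlow := by
                  nlinarith [mul_le_mul_of_nonneg_left ht1 hq0]
                exact mul_le_mul_of_nonneg_right hpt hRnpos.le
            _ ≤ vlow * (r * Rn) := by
                nlinarith [mul_le_mul_of_nonneg_left hr1 (mul_nonneg hlow.le hRnpos.le)]
            _ ≤ mechRev vbar n vG xG F := hterm
        · push_neg at hpl
          set P : ℕ → Prop := fun j => vG j ≤ p with hP
          have hP1 : P 1 := by simp only [hP]; rw [hvG1]; exact hpl.le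
          set k := Nat.findGreatest P n with hk
          have hk1 : 1 ≤ k := Nat.le_findGreatest hn hP1
          have hkn : k ≤ n := Nat.findGreatest_le n
          have hPk : vG k ≤ p := Nat.findGreatest_spec hn hP1
          have hub : p ≤ vlow * r ^ k := by
            by_cases hken : k = n
            · rw [hken, hrtop]; exact hqb
            · have hnot : ¬ P (k + 1) :=
                Nat.findGreatest_is_greatest (by rw [← hk]; omega) (by omega)
              simp only [hP] at hnot
              push_neg at hnot
              rw [hvG' k] at hnot
              exact hnot.le
          have hstep2 : (∑ i ∈ Finset.Icc 1 k, vG i * xG i) * (F (Icc p vbar)).toReal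
              ≤ ∑ i ∈ Finset.Icc 1 k, vG i * xG i * (F (Icc (vG i) vbar)).toReal := by
            rw [Finset.sum_mul]
            apply Finset.sum_le_sum
            intro i hi
            rw [Finset.mem_Icc] at hi
            apply mul_le_mul_of_nonneg_left ?_
              (mul_nonneg (hvGnonneg i (Finset.mem_Icc.mpr ⟨hi.1, by omega⟩))
                (hxG0 i (Finset.mem_Icc.mpr ⟨hi.1, by omega⟩)))
            apply ENNReal.toReal_mono (measure_ne_top F _)
            apply measure_mono
            apply Icc_subset_Icc_left
            exact le_trans (hvGmono i k hi.1 (by omega)) hPk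
          have hsplit : ∑ i ∈ Finset.Icc 1 k, vG i * xG i * (F (Icc (vG i) vbar)).toReal
              ≤ mechRev vbar n vG xG F := by
            apply sum_head_le hkn
            intro i h1 h2
            exact mul_nonneg (mul_nonneg (hvGnonneg i (Finset.mem_Icc.mpr ⟨by omega, h2⟩))
              (hxG0 i (Finset.mem_Icc.mpr ⟨by omega, h2⟩))) ENNReal.toReal_nonneg
          calc p * (F (Icc p vbar)).toReal * Rn
              ≤ (vlow * r ^ k) * (F (Icc p vbar)).toReal * Rn := by
                apply mul_le_mul_of_nonneg_right
                  (mul_le_mul_of_nonneg_right hub ht0) hRnpos.le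
            _ = (Rn * vlow * r ^ k) * (F (Icc p vbar)).toReal := by ring
            _ = (∑ i ∈ Finset.Icc 1 k, vG i * xG i) * (F (Icc p vbar)).toReal := by
                rw [hgsum k hk1 hkn]
            _ ≤ ∑ i ∈ Finset.Icc 1 k, vG i * xG i * (F (Icc (vG i) vbar)).toReal := hstep2
            _ ≤ mechRev vbar n vG xG F := hsplit
      have hopt_le := opt_le hbar0.le F hkey
      calc Rn * hindsightOpt vbar F
          ≤ Rn * (mechRev vbar n vG xG F / Rn) :=
            mul_le_mul_of_nonneg_left hopt_le hRnpos.le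
        _ = mechRev vbar n vG xG F := by field_simp
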